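/- Suppose m ≥ 3, and let H be a ½-shallow topological minor of G(ψ) of maximum density among all ½-shallow topological minors of G(ψ), and suppose this maximum density is at least 5m/(2m+1). Then in every model of H in G(ψ), the set of nails consists of the apex vertex a together with white vertices only (no gray or black vertex is a nail, and a is a nail). -/

import Mathlib

/-- The density `‖G‖/|G|` of a finite simple graph. -/
noncomputable def graphDensity {V : Type*} (G : SimpleGraph V) : ℚ :=
  (G.edgeSet.ncard : ℚ) / (Nat.card V : ℚ)

/-- A model of a topological minor `H` inside `G`: an injective nail map together
with, for every edge of `H`, a path in `G` between the corresponding nails; the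
paths are pairwise internally disjoint and their internal vertices avoid the nails. -/
structure SubdivModel {VH VG : Type*} (H : SimpleGraph VH) (G : SimpleGraph VG) where
  nail : VH → VG
  nail_inj : Function.Injective nail
  path : ∀ u v : VH, H.Adj u v → G.Walk (nail u) (nail v)
  path_isPath : ∀ u v (h : H.Adj u v), (path u v h).IsPath
  path_symm : ∀ u v (h : H.Adj u v), path v u h.symm = (path u v h).reverse
  internal_not_nail : ∀ u v (h : H.Adj u v), ∀ w ∈ (path u v h).support,
    w ≠ nail u → w ≠ nail v → ∀ x, w ≠ nail x
  paths_disjoint : ∀ u v (h : H.Adj u v), ∀ u' v' (h' : H.Adj u' v'),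
    s(u, v) ≠ s(u', v') → ∀ w, w ∈ (path u v h).support → w ∈ (path u' v' h').support →
      (w = nail u ∨ w = nail v) ∧ (w = nail u' ∨ w = nail v')

/-- `H` appears as a `k`-subdivision in `G`: the graph obtained from `H` by
subdividing every edge exactly `k` times is isomorphic to a subgraph of `G`,
i.e. there is a model all of whose paths have length exactly `k + 1`. -/
def AppearsAsSubdivision (k : ℕ) {VH VG : Type*} (H : SimpleGraph VH) (G : SimpleGraph VG) :
    Prop :=
  ∃ M : SubdivModel H G, ∀ u v (h : H.Adj u v), (M.path u v h).length = k + 1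

/-- `H` is an `r/2`-shallow topological minor of `G`: a graph obtained from `H` by
subdividing each edge at most `r` times is isomorphic to a subgraph of `G`,
i.e. there is a model all of whose paths have length at most `r + 1`. -/
def IsShallowTopMinor (r : ℕ) {VH VG : Type*} (H : SimpleGraph VH) (G : SimpleGraph VG) :
    Prop :=
  ∃ M : SubdivModel H G, ∀ u v (h : H.Adj u v), (M.path u v h).length ≤ r + 1

/-- A CNF formula with `m` clauses over `p` (positive) variables, each clause consisting
of exactly three distinct positive literals and every variable occurring in at least
three clauses. -/
structure PosCnf (p m : ℕ) where
  clause : Fin m → Finset (Fin p)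
  card_eq : ∀ i, (clause i).card = 3
  freq : ∀ v : Fin p, 3 ≤ (Finset.univ.filter (fun i => v ∈ clause i)).card

/-- `σ` is a 1-in-3 satisfying assignment for `ψ`: every clause contains exactly one
true variable. -/
def PosCnf.Sat1in3 {p m : ℕ} (ψ : PosCnf p m) (σ : Fin p → Bool) : Prop :=
  ∀ i, ((ψ.clause i).filter (fun v => σ v = true)).card = 1

/-- Occurrences of variables in clauses of `ψ`. -/
def PosCnf.Occ {p m : ℕ} (ψ : PosCnf p m) : Type :=
  {q : Fin m × Fin p // q.2 ∈ ψ.clause q.1}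

/-- `succ` arranges, for each variable, its occurrences into a single cycle: it is a
permutation of occurrences preserving the variable whose restriction to the
occurrences of each variable is one cycle. -/
def CycleData {p m : ℕ} (ψ : PosCnf p m) (succ : Equiv.Perm ψ.Occ) : Prop :=
  (∀ o : ψ.Occ, (succ o).1.2 = o.1.2) ∧
  (∀ o o' : ψ.Occ, o.1.2 = o'.1.2 → succ.SameCycle o o')

/-- Vertices of the graph `G(ψ)`: `none` is the apex `a`; `some (inl o)` is the white
vertex for the occurrence `o`; `some (inr (inl i))` is the gray vertex of clause `i`;
`some (inr (inr (o, true)))` is the black vertex subdividing the apex–white(`o`) edge;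
`some (inr (inr (o, false)))` is the black vertex subdividing the cycle edge from
white(`o`) to white(`succ o`). -/
def GPsiV {p m : ℕ} (ψ : PosCnf p m) : Type :=
  Option (ψ.Occ ⊕ Fin m ⊕ ψ.Occ × Bool)

/-- The graph `G(ψ)` of the reduction (for `r` odd, `r = 1`): variable cycles `D_i`
(one white vertex per occurrence), an apex `a` joined to all white vertices, one gray
vertex per clause joined to the three corresponding white vertices, and every cycle
edge and apex edge subdivided exactly once by a black vertex. -/
def GPsi {p m : ℕ} (ψ : PosCnf p m) (succ : Equiv.Perm ψ.Occ) : SimpleGraph (GPsiV ψ) :=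
  SimpleGraph.fromRel (fun x y =>
    -- apex  — black subdividing an apex edge
    (∃ o : ψ.Occ, x = none ∧ y = some (Sum.inr (Sum.inr (o, true)))) ∨
    -- white(o) — black subdividing the apex edge at o
    (∃ o : ψ.Occ, x = some (Sum.inl o) ∧ y = some (Sum.inr (Sum.inr (o, true)))) ∨
    -- white(o) — black subdividing the cycle edge (o, succ o)
    (∃ o : ψ.Occ, x = some (Sum.inl o) ∧ y = some (Sum.inr (Sum.inr (o, false)))) ∨
    -- white(succ o) — black subdividing the cycle edge (o, succ o)
    (∃ o : ψ.Occ, x = some (Sum.inl (succ o)) ∧ y = some (Sum.inr (Sum.inr (o, false)))) ∨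
    -- white(o) — gray vertex of the clause of o
    (∃ o : ψ.Occ, x = some (Sum.inl o) ∧ y = some (Sum.inr (Sum.inl o.1.1))))



attribute [reducible] GPsiV PosCnf.Occ

namespace Stmt7

variable {p m : ℕ} {ψ : PosCnf p m} {succ : Equiv.Perm ψ.Occ}

abbrev wh (o : ψ.Occ) : GPsiV ψ := some (Sum.inl o)
abbrev gr (ψ : PosCnf p m) (i : Fin m) : GPsiV ψ := some (Sum.inr (Sum.inl i))
abbrev bk (o : ψ.Occ) (b : Bool) : GPsiV ψ := some (Sum.inr (Sum.inr (o, b)))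

lemma gp_some_inj {x y : ψ.Occ ⊕ Fin m ⊕ ψ.Occ × Bool} :
    (some x : GPsiV ψ) = some y ↔ x = y := Option.some_inj

lemma gp_some_ne_none {x : ψ.Occ ⊕ Fin m ⊕ ψ.Occ × Bool} :
    (some x : GPsiV ψ) ≠ none := Option.some_ne_none x

lemma gp_none_ne_some {x : ψ.Occ ⊕ Fin m ⊕ ψ.Occ × Bool} :
    (none : GPsiV ψ) ≠ some x := (Option.some_ne_none x).symm

lemma adj_bk_true {o : ψ.Occ} {y : GPsiV ψ} (h : (GPsi ψ succ).Adj (bk o true) y) :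
    y = none ∨ y = wh o := by
  rw [GPsi, SimpleGraph.fromRel_adj] at h
  obtain ⟨-, h | h⟩ := h <;>
    rcases h with ⟨o', h1, h2⟩ | ⟨o', h1, h2⟩ | ⟨o', h1, h2⟩ | ⟨o', h1, h2⟩ | ⟨o', h1, h2⟩ <;>
    simp_all [wh, gr, bk, gp_some_inj, gp_some_ne_none, gp_none_ne_some]

lemma adj_bk_false {o : ψ.Occ} {y : GPsiV ψ} (h : (GPsi ψ succ).Adj (bk o false) y) :
    y = wh o ∨ y = wh (succ o) := by
  rw [GPsi, SimpleGraph.fromRel_adj] at h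
  obtain ⟨-, h | h⟩ := h <;>
    rcases h with ⟨o', h1, h2⟩ | ⟨o', h1, h2⟩ | ⟨o', h1, h2⟩ | ⟨o', h1, h2⟩ | ⟨o', h1, h2⟩ <;>
    simp_all [wh, gr, bk, gp_some_inj, gp_some_ne_none, gp_none_ne_some]

lemma adj_gr {i : Fin m} {y : GPsiV ψ} (h : (GPsi ψ succ).Adj (gr ψ i) y) :
    ∃ o : ψ.Occ, o.1.1 = i ∧ y = wh o := by
  rw [GPsi, SimpleGraph.fromRel_adj] at h
  obtain ⟨-, h | h⟩ := h <;>
    rcases h with ⟨o', h1, h2⟩ | ⟨o', h1, h2⟩ | ⟨o', h1, h2⟩ | ⟨o', h1, h2⟩ | ⟨o', h1, h2⟩ <;>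
    simp_all [wh, gr, bk, gp_some_inj, gp_some_ne_none, gp_none_ne_some]

lemma adj_wh {o : ψ.Occ} {y : GPsiV ψ} (h : (GPsi ψ succ).Adj (wh o) y) :
    y = bk o true ∨ y = bk o false ∨ y = bk (succ.symm o) false ∨ y = gr ψ o.1.1 := by
  rw [GPsi, SimpleGraph.fromRel_adj] at h
  obtain ⟨-, h | h⟩ := h <;>
    rcases h with ⟨o', h1, h2⟩ | ⟨o', h1, h2⟩ | ⟨o', h1, h2⟩ | ⟨o', h1, h2⟩ | ⟨o', h1, h2⟩ <;>
    simp_all [wh, gr, bk, gp_some_inj, gp_some_ne_none, gp_none_ne_some, Equiv.symm_apply_eq]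

lemma adj_wh_gr {o : ψ.Occ} {i : Fin m} (h : o.1.1 = i) :
    (GPsi ψ succ).Adj (wh o) (gr ψ i) := by
  rw [GPsi, SimpleGraph.fromRel_adj]
  exact ⟨by simp [wh, gr], Or.inl (Or.inr (Or.inr (Or.inr (Or.inr ⟨o, rfl, by rw [h]⟩))))⟩

variable {VH VG : Type*} {H : SimpleGraph VH} {G : SimpleGraph VG}

lemma walk_short {u v : VG} (W : G.Walk u v) (hW : W.IsPath) (hlen : W.length ≤ 2)
    (huv : u ≠ v) :
    (G.Adj u v ∧ W.support = [u, v]) ∨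
    (∃ s, G.Adj u s ∧ G.Adj s v ∧ W.support = [u, s, v] ∧ s ≠ u ∧ s ≠ v) := by
  cases W with
  | nil => exact absurd rfl huv
  | cons h W' =>
    cases W' with
    | nil => exact Or.inl ⟨h, by simp⟩
    | cons h' W'' =>
      cases W'' with
      | nil =>
        simp only [SimpleGraph.Walk.isPath_def, SimpleGraph.Walk.support_cons,
          SimpleGraph.Walk.support_nil, List.nodup_cons, List.mem_cons,
          List.mem_singleton, List.not_mem_nil] at hW
        refine Or.inr ⟨_, h, h', by simp, ?_, ?_⟩
        · rintro rfl; simp_all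
        · rintro rfl; simp_all
      | cons h'' W''' => simp [SimpleGraph.Walk.length_cons] at hlen

/-- the second vertex of a walk -/
def sv {u v : VG} (W : G.Walk u v) : VG := W.support.tail.headD u

lemma sym2_coe {s : Set VH} {a b c d : s} (h : s(a, b) ≠ s(c, d)) :
    s((a : VH), (b : VH)) ≠ s((c : VH), (d : VH)) := by
  simp only [ne_eq, Sym2.eq_iff] at h ⊢
  push_neg at h ⊢
  constructor
  · intro h1 h2; exact absurd (Subtype.ext h2) ((h.1 (Subtype.ext h1)))
  · intro h1 h2; exact absurd (Subtype.ext h2) ((h.2 (Subtype.ext h1)))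

lemma sym2_ne {x v v' : VH} (hv : H.Adj x v) (hne : v ≠ v') : s(x, v) ≠ s(x, v') := by
  simp only [ne_eq, Sym2.eq_iff]
  push_neg
  exact ⟨fun _ => hne, fun _ h2 => hv.ne h2.symm⟩

/-- dichotomy for paths in a model with lengths ≤ 2 -/
lemma model_dich (M : SubdivModel H G)
    (hlen : ∀ u v (h : H.Adj u v), (M.path u v h).length ≤ 2) {x v : VH} (hv : H.Adj x v) :
    (sv (M.path x v hv) = M.nail v ∧ G.Adj (M.nail x) (M.nail v)) ∨
    (∃ s, sv (M.path x v hv) = s ∧ G.Adj (M.nail x) s ∧ G.Adj s (M.nail v) ∧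
      s ∈ (M.path x v hv).support ∧ ∀ z, s ≠ M.nail z) := by
  have hne : M.nail x ≠ M.nail v := fun hc => hv.ne (M.nail_inj hc)
  rcases walk_short (M.path x v hv) (M.path_isPath x v hv) (hlen x v hv) hne with
    ⟨ha, hs⟩ | ⟨s, h1, h2, hs, hsx, hsv⟩
  · exact Or.inl ⟨by simp [sv, hs], ha⟩
  · refine Or.inr ⟨s, by simp [sv, hs], h1, h2, by simp [hs], ?_⟩
    exact M.internal_not_nail x v hv s (by simp [hs]) hsx hsv

lemma deg_le (M : SubdivModel H G)
    (hlen : ∀ u v (h : H.Adj u v), (M.path u v h).length ≤ 2) (x : VH) (S : Finset VG) (hS : ∀ y, G.Adj (M.nail x) y → y ∈ S) :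
    (H.neighborSet x).ncard ≤ S.card := by
  classical
  rw [← Set.ncard_coe_finset S]
  apply Set.ncard_le_ncard_of_injOn (fun v => if hv : H.Adj x v then sv (M.path x v hv) else M.nail x)
  · intro v hv
    simp only [SimpleGraph.mem_neighborSet] at hv
    simp only [dif_pos hv]
    rcases model_dich M hlen hv with ⟨he, ha⟩ | ⟨s, he, h1, _, _, _⟩
    · rw [he]; exact hS _ ha
    · rw [he]; exact hS _ h1
  · intro v hv v' hv' heq
    simp only [SimpleGraph.mem_neighborSet] at hv hv'
    by_contra hne
    simp only [dif_pos hv, dif_pos hv'] at heq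
    rcases model_dich M hlen hv with ⟨he, _⟩ | ⟨s, he, _, _, hmem, hnn⟩ <;>
      rcases model_dich M hlen hv' with ⟨he', _⟩ | ⟨s', he', _, _, hmem', hnn'⟩
    · exact hne (M.nail_inj (he ▸ he' ▸ heq))
    · exact hnn' v (by rw [← he', ← heq, he])
    · exact hnn v' (by rw [← he, heq, he'])
    · subst he he'
      rw [heq] at hmem hnn
      have hd := M.paths_disjoint x v hv x v' hv' (sym2_ne hv hne) _ hmem (heq ▸ hmem')
      rcases hd.1 with h | h
      · exact hnn x h
      · exact hnn v h

variable {VH VG : Type*} {H : SimpleGraph VH} {G : SimpleGraph VG}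

/-- restriction of a model to an induced subgraph -/
def induceModel (M : SubdivModel H G) (s : Set VH) :
    SubdivModel (H.induce s) G where
  nail y := M.nail ↑y
  nail_inj y z h := Subtype.ext (M.nail_inj h)
  path y z h := M.path ↑y ↑z h
  path_isPath y z h := M.path_isPath ↑y ↑z h
  path_symm y z h := M.path_symm ↑y ↑z h
  internal_not_nail y z h w hw h1 h2 x := M.internal_not_nail ↑y ↑z h w hw h1 h2 ↑x
  paths_disjoint y z h y' z' h' hne w hw hw' :=
    M.paths_disjoint ↑y ↑z h ↑y' ↑z' h' (sym2_coe hne) w hw hw'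

lemma edge_count_induce [Finite VH] (x : VH) :
    H.edgeSet.ncard ≤ (H.induce {y | y ≠ x}).edgeSet.ncard + (H.neighborSet x).ncard := by
  classical
  have hsub : H.edgeSet ⊆
      (Sym2.map (Subtype.val : {y // y ≠ x} → VH) '' (H.induce {y | y ≠ x}).edgeSet) ∪
        H.incidenceSet x := by
    intro e he
    induction e with
    | _ a b =>
      rw [SimpleGraph.mem_edgeSet] at he
      by_cases hax : a = x
      · exact Or.inr ⟨he, by simp [hax]⟩
      by_cases hbx : b = x
      · exact Or.inr ⟨he, by simp [hbx]⟩
      · left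
        refine ⟨s(⟨a, hax⟩, ⟨b, hbx⟩), ?_, by simp⟩
        rw [SimpleGraph.mem_edgeSet]
        exact he
  calc H.edgeSet.ncard ≤ _ := Set.ncard_le_ncard hsub (Set.toFinite _)
    _ ≤ (Sym2.map (Subtype.val : {y // y ≠ x} → VH) '' (H.induce {y | y ≠ x}).edgeSet).ncard
        + (H.incidenceSet x).ncard := Set.ncard_union_le _ _
    _ ≤ (H.induce {y | y ≠ x}).edgeSet.ncard + (H.neighborSet x).ncard := by
        gcongr
        · exact Set.ncard_image_le (Set.toFinite _)
        · rw [← Nat.card_coe_set_eq, ← Nat.card_coe_set_eq]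
          exact (Nat.card_congr (H.incidenceSetEquivNeighborSet x)).le

section Extend

open SimpleGraph Walk

/-- `H` with vertex `x` deleted and an edge `u1u2` added. -/
def extGraph (H : SimpleGraph VH) (x u1 u2 : VH) : SimpleGraph {y : VH // y ≠ x} :=
  SimpleGraph.fromRel (fun y z => H.Adj ↑y ↑z ∨ ((y : VH) = u1 ∧ (z : VH) = u2))

lemma ext_resolve {x u1 u2 : VH} {y z : {y : VH // y ≠ x}}
    (h : (extGraph H x u1 u2).Adj y z) (hyz : ¬ H.Adj ↑y ↑z) :
    ((y : VH) = u1 ∧ (z : VH) = u2) ∨ ((y : VH) = u2 ∧ (z : VH) = u1) := by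
  rw [extGraph, SimpleGraph.fromRel_adj] at h
  rcases h.2 with (h' | h') | (h' | h')
  exacts [absurd h' hyz, Or.inl h', absurd h'.symm hyz, Or.inr ⟨h'.2, h'.1⟩]

variable (M : SubdivModel H G) {x u1 u2 : VH} {c : VG}

open scoped Classical in
/-- the path data for the extended model -/
noncomputable def pathX (hc1 : G.Adj (M.nail u1) c) (hc2 : G.Adj c (M.nail u2))
    (y z : {y : VH // y ≠ x}) (h : (extGraph H x u1 u2).Adj y z) :
    G.Walk (M.nail ↑y) (M.nail ↑z) :=
  if hyz : H.Adj ↑y ↑z then M.path ↑y ↑z hyz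
  else if h12 : (y : VH) = u1 ∧ (z : VH) = u2 then
    (SimpleGraph.Walk.cons hc1 (SimpleGraph.Walk.cons hc2 SimpleGraph.Walk.nil)).copy
      (congrArg M.nail h12.1.symm) (congrArg M.nail h12.2.symm)
  else
    (SimpleGraph.Walk.cons hc1 (SimpleGraph.Walk.cons hc2 SimpleGraph.Walk.nil)).reverse.copy
      (congrArg M.nail ((ext_resolve h hyz).resolve_left h12).1.symm)
      (congrArg M.nail ((ext_resolve h hyz).resolve_left h12).2.symm)

lemma pathX_cases (hc1 : G.Adj (M.nail u1) c) (hc2 : G.Adj c (M.nail u2))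
    (y z : {y : VH // y ≠ x}) (h : (extGraph H x u1 u2).Adj y z) :
    (∃ hyz : H.Adj ↑y ↑z, pathX M hc1 hc2 y z h = M.path ↑y ↑z hyz) ∨
    (¬ H.Adj ↑y ↑z ∧ (pathX M hc1 hc2 y z h).support = [M.nail ↑y, c, M.nail ↑z] ∧
      (pathX M hc1 hc2 y z h).length = 2 ∧
      (((y : VH) = u1 ∧ (z : VH) = u2) ∨ ((y : VH) = u2 ∧ (z : VH) = u1))) := by
  classical
  unfold pathX
  split_ifs with hyz h12
  · exact Or.inl ⟨hyz, rfl⟩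
  · exact Or.inr ⟨hyz, by simp [h12.1, h12.2], by simp, Or.inl h12⟩
  · have h21 := (ext_resolve h hyz).resolve_left h12
    exact Or.inr ⟨hyz, by simp [h21.1, h21.2], by simp, Or.inr h21⟩

lemma c_not_nail (hcx : c = M.nail x) : ∀ y : {y : VH // y ≠ x}, c ≠ M.nail ↑y := by
  rintro y hc
  exact y.2 (M.nail_inj (hcx.symm.trans hc)).symm

lemma c_not_in_old (hcx : c = M.nail x) {y z : VH} (h : H.Adj y z) (hy : y ≠ x) (hz : z ≠ x) :
    c ∉ (M.path y z h).support := by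
  intro hc
  have h1 : c ≠ M.nail y := fun hcc => hy (M.nail_inj (hcx.symm.trans hcc)).symm
  have h2 : c ≠ M.nail z := fun hcc => hz (M.nail_inj (hcx.symm.trans hcc)).symm
  exact M.internal_not_nail y z h c hc h1 h2 x hcx

/-- the extended model: delete `x`, add the edge `u1u2` realized through `c = nail x`. -/
noncomputable def extModel (hu1 : H.Adj x u1) (hu2 : H.Adj x u2) (hne : u1 ≠ u2)
    (hc1 : G.Adj (M.nail u1) c) (hc2 : G.Adj c (M.nail u2)) (hcx : c = M.nail x) :
    SubdivModel (extGraph H x u1 u2) G where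
  nail y := M.nail ↑y
  nail_inj a b hab := Subtype.ext (M.nail_inj hab)
  path := pathX M hc1 hc2
  path_isPath := by
    intro y z h
    rcases pathX_cases M hc1 hc2 y z h with ⟨hyz, he⟩ | ⟨hyz, hs, hl, hor⟩
    · rw [he]; exact M.path_isPath ↑y ↑z hyz
    · rw [SimpleGraph.Walk.isPath_def, hs]
      have hyz' : M.nail ↑y ≠ M.nail ↑z := fun hcc => h.ne (Subtype.ext (M.nail_inj hcc))
      simp [List.nodup_cons, (c_not_nail M hcx y).symm, (c_not_nail M hcx z).symm,
        c_not_nail M hcx y, c_not_nail M hcx z, hyz']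
  path_symm := by
    intro y z h
    unfold pathX
    by_cases hyz : H.Adj ↑y ↑z
    · rw [dif_pos hyz.symm, dif_pos hyz]
      exact M.path_symm ↑y ↑z hyz
    · by_cases h12 : (y : VH) = u1 ∧ (z : VH) = u2
      · have hz1 : ¬ ((z : VH) = u1 ∧ (y : VH) = u2) := fun hcc => hne (h12.1 ▸ hcc.2 ▸ rfl)
        rw [dif_neg (fun hcc => hyz hcc.symm), dif_neg hz1, dif_neg hyz, dif_pos h12]
        simp
      · have h21 := (ext_resolve h hyz).resolve_left h12
        have hz1 : (z : VH) = u1 ∧ (y : VH) = u2 := ⟨h21.2, h21.1⟩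
        rw [dif_neg (fun hcc => hyz hcc.symm), dif_pos hz1, dif_neg hyz, dif_neg h12]
        simp
  internal_not_nail := by
    intro y z h w hw hwy hwz t
    rcases pathX_cases M hc1 hc2 y z h with ⟨hyz, he⟩ | ⟨hyz, hs, hl, hor⟩
    · rw [he] at hw
      exact M.internal_not_nail ↑y ↑z hyz w hw hwy hwz ↑t
    · rw [hs] at hw
      simp only [List.mem_cons, List.not_mem_nil, or_false] at hw
      rcases hw with hw | hw | hw
      · exact absurd hw hwy
      · exact hw ▸ c_not_nail M hcx t
      · exact absurd hw hwz
  paths_disjoint := by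
    intro y z h y' z' h' hSne w hw hw'
    rcases pathX_cases M hc1 hc2 y z h with ⟨hyz, he⟩ | ⟨hyz, hs, hl, hor⟩ <;>
      rcases pathX_cases M hc1 hc2 y' z' h' with ⟨hyz', he'⟩ | ⟨hyz', hs', hl', hor'⟩
    · rw [he] at hw; rw [he'] at hw'
      exact M.paths_disjoint ↑y ↑z hyz ↑y' ↑z' hyz' (sym2_coe hSne) w hw hw'
    · -- old / new
      rw [he] at hw; rw [hs'] at hw'
      have hwin : w = M.nail ↑y' ∨ w = M.nail ↑z' := by
        simp only [List.mem_cons, List.not_mem_nil, or_false] at hw'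
        rcases hw' with hw' | hw' | hw'
        · exact Or.inl hw'
        · exact absurd (hw' ▸ hw) (c_not_in_old M hcx hyz y.2 z.2)
        · exact Or.inr hw'
      refine ⟨?_, hwin⟩
      by_contra hcon
      push_neg at hcon
      rcases hwin with hw2 | hw2 <;>
        exact M.internal_not_nail ↑y ↑z hyz w hw hcon.1 hcon.2 _ hw2
    · -- new / old
      rw [he'] at hw'; rw [hs] at hw
      have hwin : w = M.nail ↑y ∨ w = M.nail ↑z := by
        simp only [List.mem_cons, List.not_mem_nil, or_false] at hw
        rcases hw with hw | hw | hw
        · exact Or.inl hw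
        · exact absurd (hw ▸ hw') (c_not_in_old M hcx hyz' y'.2 z'.2)
        · exact Or.inr hw
      refine ⟨hwin, ?_⟩
      by_contra hcon
      push_neg at hcon
      rcases hwin with hw2 | hw2 <;>
        exact M.internal_not_nail ↑y' ↑z' hyz' w hw' hcon.1 hcon.2 _ hw2
    · -- new / new : impossible since the Sym2's agree
      exfalso
      apply hSne
      have e1 : s(y, z) = s(⟨u1, hu1.ne'⟩, (⟨u2, hu2.ne'⟩ : {y : VH // y ≠ x})) := by
        rcases hor with ⟨h1, h2⟩ | ⟨h1, h2⟩
        · rw [Sym2.eq_iff]; exact Or.inl ⟨Subtype.ext h1, Subtype.ext h2⟩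
        · rw [Sym2.eq_iff]; exact Or.inr ⟨Subtype.ext h1, Subtype.ext h2⟩
      have e2 : s(y', z') = s(⟨u1, hu1.ne'⟩, (⟨u2, hu2.ne'⟩ : {y : VH // y ≠ x})) := by
        rcases hor' with ⟨h1, h2⟩ | ⟨h1, h2⟩
        · rw [Sym2.eq_iff]; exact Or.inl ⟨Subtype.ext h1, Subtype.ext h2⟩
        · rw [Sym2.eq_iff]; exact Or.inr ⟨Subtype.ext h1, Subtype.ext h2⟩
      rw [e1, e2]

lemma extModel_len (hu1 : H.Adj x u1) (hu2 : H.Adj x u2) (hne : u1 ≠ u2)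
    (hc1 : G.Adj (M.nail u1) c) (hc2 : G.Adj c (M.nail u2)) (hcx : c = M.nail x) (hlen : ∀ u v (h : H.Adj u v), (M.path u v h).length ≤ 2) :
    ∀ y z (h : (extGraph H x u1 u2).Adj y z),
      ((extModel M hu1 hu2 hne hc1 hc2 hcx).path y z h).length ≤ 2 := by
  intro y z h
  show (pathX M hc1 hc2 y z h).length ≤ 2
  rcases pathX_cases M hc1 hc2 y z h with ⟨hyz, he⟩ | ⟨hyz, hs, hl, hor⟩
  · rw [he]; exact hlen ↑y ↑z hyz
  · rw [hl]

lemma edge_count_ext [Finite VH] (hu1 : H.Adj x u1) (hu2 : H.Adj x u2) (hne : u1 ≠ u2) (hnadj : ¬ H.Adj u1 u2)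
    (hdeg : (H.neighborSet x).ncard ≤ 3) :
    H.edgeSet.ncard ≤ (extGraph H x u1 u2).edgeSet.ncard + 2 := by
  classical
  set A := Sym2.map (Subtype.val : {y : VH // y ≠ x} → VH) '' (extGraph H x u1 u2).edgeSet
    with hA
  have h1 : H.edgeSet \ H.incidenceSet x ⊆ A := by
    rintro e ⟨he, hex⟩
    induction e with
    | _ a b =>
      rw [SimpleGraph.mem_edgeSet] at he
      have hax : a ≠ x := fun hc => hex ⟨he, by simp [hc]⟩
      have hbx : b ≠ x := fun hc => hex ⟨he, by simp [hc]⟩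
      refine ⟨s(⟨a, hax⟩, ⟨b, hbx⟩), ?_, by simp⟩
      rw [SimpleGraph.mem_edgeSet, extGraph, SimpleGraph.fromRel_adj]
      exact ⟨fun hc => he.ne (congrArg Subtype.val hc), Or.inl (Or.inl he)⟩
  have h2 : s(u1, u2) ∈ A := by
    refine ⟨s(⟨u1, hu1.ne'⟩, ⟨u2, hu2.ne'⟩), ?_, by simp⟩
    rw [SimpleGraph.mem_edgeSet, extGraph, SimpleGraph.fromRel_adj]
    exact ⟨fun hc => hne (congrArg Subtype.val hc), Or.inl (Or.inr ⟨rfl, rfl⟩)⟩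
  have h3 : s(u1, u2) ∉ H.edgeSet \ H.incidenceSet x := by
    rintro ⟨he, -⟩
    exact hnadj ((SimpleGraph.mem_edgeSet _).mp he)
  have h4 : (insert s(u1, u2) (H.edgeSet \ H.incidenceSet x)).ncard ≤ A.ncard :=
    Set.ncard_le_ncard (by rintro e (rfl | he); exacts [h2, h1 he]) (Set.toFinite _)
  rw [Set.ncard_insert_of_notMem h3 (Set.toFinite _)] at h4
  have h5 : A.ncard ≤ (extGraph H x u1 u2).edgeSet.ncard := Set.ncard_image_le (Set.toFinite _)
  have h6 : (H.edgeSet \ H.incidenceSet x).ncard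
      = H.edgeSet.ncard - (H.incidenceSet x).ncard :=
    Set.ncard_diff (H.incidenceSet_subset x) (Set.toFinite _)
  have h7 : (H.incidenceSet x).ncard ≤ 3 := by
    rw [← Nat.card_coe_set_eq] at hdeg ⊢
    exact (Nat.card_congr (H.incidenceSetEquivNeighborSet x)).le.trans hdeg
  have h8 : (H.incidenceSet x).ncard ≤ H.edgeSet.ncard :=
    Set.ncard_le_ncard (H.incidenceSet_subset x) (Set.toFinite _)
  omega

end Extend



lemma two_lt_target (hm : 3 ≤ m) : (2 : ℚ) < 5 * m / (2 * m + 1) := by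
  have hmQ : (3 : ℚ) ≤ (m : ℚ) := by exact_mod_cast hm
  rw [lt_div_iff₀ (by linarith)]
  linarith

lemma edge_ncard_zero_of_card_one {VH : Type} (H : SimpleGraph VH) (h : Nat.card VH = 1) :
    H.edgeSet.ncard = 0 := by
  have hs : Subsingleton VH := (Nat.card_eq_one_iff_unique.mp h).1
  have : H.edgeSet = ∅ := by
    ext e
    induction e with
    | _ a b =>
      simp only [SimpleGraph.mem_edgeSet, Set.mem_empty_iff_false, iff_false]
      intro hadj
      exact hadj.ne (Subsingleton.elim a b)
  rw [this, Set.ncard_empty]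

lemma density_lt (hm : 3 ≤ m) {VH VH' : Type} (H : SimpleGraph VH) (H' : SimpleGraph VH')
    (hd : (5 * m : ℚ) / (2 * m + 1) ≤ graphDensity H)
    (hV : Nat.card VH' + 1 = Nat.card VH)
    (hE : H.edgeSet.ncard ≤ H'.edgeSet.ncard + 2) :
    graphDensity H < graphDensity H' := by
  have h2 := lt_of_lt_of_le (two_lt_target hm) hd
  have hn0 : Nat.card VH ≠ 0 := by
    intro h
    rw [graphDensity, h] at h2
    norm_num at h2
  have hn1 : Nat.card VH ≠ 1 := by
    intro h
    rw [graphDensity, h, edge_ncard_zero_of_card_one H h] at h2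
    norm_num at h2
  have hn2 : 2 ≤ Nat.card VH := by omega
  have hnQ : (2 : ℚ) ≤ (Nat.card VH : ℚ) := by exact_mod_cast hn2
  have hnpos : (0 : ℚ) < (Nat.card VH : ℚ) := by linarith
  rw [graphDensity, lt_div_iff₀ hnpos] at h2
  -- h2 : 2 * n < e
  have hn' : (1 : ℚ) ≤ (Nat.card VH' : ℚ) := by
    have : 1 ≤ Nat.card VH' := by omega
    exact_mod_cast this
  have hVQ : (Nat.card VH' : ℚ) + 1 = (Nat.card VH : ℚ) := by exact_mod_cast hV
  have hEQ : (H.edgeSet.ncard : ℚ) ≤ (H'.edgeSet.ncard : ℚ) + 2 := by exact_mod_cast hE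
  rw [graphDensity, graphDensity, div_lt_div_iff₀ hnpos (by linarith)]
  nlinarith [h2, hEQ, hVQ, hn']

lemma card_subtype_ne {VH : Type} [Finite VH] [Nonempty VH] (x : VH) :
    Nat.card {y : VH // y ≠ x} + 1 = Nat.card VH := by
  classical
  haveI : Fintype VH := Fintype.ofFinite VH
  have h0 : Nat.card {y : VH // y ≠ x} = Fintype.card {y : VH // ¬ y = x} :=
    Nat.card_eq_fintype_card
  have h := Fintype.card_subtype_compl (fun y : VH => y = x)
  have h1 : Fintype.card {y : VH // y = x} = 1 := Fintype.card_subtype_eq x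
  have h2 : 0 < Fintype.card VH := Fintype.card_pos
  rw [h0, h, h1, Nat.card_eq_fintype_card]
  omega

lemma contra_del {m : ℕ} (hm : 3 ≤ m) {VH : Type} {VG : Type*}
    {H : SimpleGraph VH} {G : SimpleGraph VG}
    (hmax : ∀ (VH' : Type) (H' : SimpleGraph VH'),
      IsShallowTopMinor 1 H' G → graphDensity H' ≤ graphDensity H)
    (hdens : (5 * m : ℚ) / (2 * m + 1) ≤ graphDensity H)
    (M : SubdivModel H G) (hlen : ∀ u v (h : H.Adj u v), (M.path u v h).length ≤ 2)
    (x : VH) (hdeg : (H.neighborSet x).ncard ≤ 2) : False := by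
  have h2 := lt_of_lt_of_le (two_lt_target hm) hdens
  have hn0 : Nat.card VH ≠ 0 := by
    intro h; rw [graphDensity, h] at h2; norm_num at h2
  obtain ⟨hne, hfin⟩ := Nat.card_pos_iff.mp (Nat.pos_of_ne_zero hn0)
  have hminor : IsShallowTopMinor 1 (H.induce {y : VH | y ≠ x}) G :=
    ⟨induceModel M {y : VH | y ≠ x}, fun y z h => hlen ↑y ↑z h⟩
  have hVcard : Nat.card ↥{y : VH | y ≠ x} + 1 = Nat.card VH := card_subtype_ne x
  have hE : H.edgeSet.ncard ≤ (H.induce {y : VH | y ≠ x}).edgeSet.ncard + 2 :=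
    (edge_count_induce x).trans (by omega)
  exact absurd (hmax _ _ hminor)
    (not_le.mpr (density_lt hm H (H.induce {y : VH | y ≠ x}) hdens hVcard hE))

lemma contra_ext {m : ℕ} (hm : 3 ≤ m) {VH : Type} {VG : Type*}
    {H : SimpleGraph VH} {G : SimpleGraph VG}
    (hmax : ∀ (VH' : Type) (H' : SimpleGraph VH'),
      IsShallowTopMinor 1 H' G → graphDensity H' ≤ graphDensity H)
    (hdens : (5 * m : ℚ) / (2 * m + 1) ≤ graphDensity H)
    (M : SubdivModel H G) (hlen : ∀ u v (h : H.Adj u v), (M.path u v h).length ≤ 2)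
    {x u1 u2 : VH} {c : VG}
    (hu1 : H.Adj x u1) (hu2 : H.Adj x u2) (hne : u1 ≠ u2)
    (hc1 : G.Adj (M.nail u1) c) (hc2 : G.Adj c (M.nail u2)) (hcx : c = M.nail x)
    (hnadj : ¬ H.Adj u1 u2) (hdeg : (H.neighborSet x).ncard ≤ 3) : False := by
  have h2 := lt_of_lt_of_le (two_lt_target hm) hdens
  have hn0 : Nat.card VH ≠ 0 := by
    intro h; rw [graphDensity, h] at h2; norm_num at h2
  obtain ⟨hnem, hfin⟩ := Nat.card_pos_iff.mp (Nat.pos_of_ne_zero hn0)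
  have hminor : IsShallowTopMinor 1 (extGraph H x u1 u2) G :=
    ⟨extModel M hu1 hu2 hne hc1 hc2 hcx, extModel_len M hu1 hu2 hne hc1 hc2 hcx hlen⟩
  have hVcard : Nat.card {y : VH // y ≠ x} + 1 = Nat.card VH := card_subtype_ne x
  have hE : H.edgeSet.ncard ≤ (extGraph H x u1 u2).edgeSet.ncard + 2 :=
    edge_count_ext hu1 hu2 hne hnadj hdeg
  exact absurd (hmax _ _ hminor)
    (not_le.mpr (density_lt hm H (extGraph H x u1 u2) hdens hVcard hE))

lemma occ_filter_card {p m : ℕ} (ψ : PosCnf p m) (i : Fin m) :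
    (Finset.univ.filter (fun o : ψ.Occ => o.1.1 = i)).card ≤ 3 := by
  classical
  rw [← ψ.card_eq i]
  apply Finset.card_le_card_of_injOn (fun o => o.1.2)
  · intro o ho
    simp only [Finset.mem_coe, Finset.mem_filter] at ho
    exact ho.2 ▸ o.2
  · intro o ho o' ho' hoo
    simp only [Finset.mem_coe, Finset.mem_filter] at ho ho'
    exact Subtype.ext (Prod.ext (ho.2.trans ho'.2.symm) hoo)

lemma card4 {α : Type*} [DecidableEq α] (a b c d : α) : ({a, b, c, d} : Finset α).card ≤ 4 := by
  apply (Finset.card_insert_le _ _).trans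
  have h1 : ({b, c, d} : Finset α).card ≤ 3 := by
    apply (Finset.card_insert_le _ _).trans
    have h2 : ({c, d} : Finset α).card ≤ 2 := Finset.card_insert_le _ _
    omega
  omega

lemma deg_eq_ncard {VH : Type} [Fintype VH] {H : SimpleGraph VH} [DecidableRel H.Adj] (x : VH) :
    H.degree x = (H.neighborSet x).ncard := by
  rw [← Nat.card_coe_set_eq, Nat.card_eq_fintype_card,
    SimpleGraph.card_neighborSet_eq_degree]

end Stmt7

/-- Suppose `m ≥ 3` and `H` is a `½`-shallow topological minor of `G(ψ)`
of maximum density among all `½`-shallow topological minors of `G(ψ)`, this maximum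
density being at least `5m/(2m+1)`. Then in every model of `H` in `G(ψ)`, the set of
nails consists of the apex vertex `a` (= `none`) together with white vertices only. -/
theorem stmt_7 {p m : ℕ} (ψ : PosCnf p m) (succ : Equiv.Perm ψ.Occ)
    (hsucc : CycleData ψ succ) (hm : 3 ≤ m)
    {VH : Type} (H : SimpleGraph VH)
    (hH : IsShallowTopMinor 1 H (GPsi ψ succ))
    (hmax : ∀ (VH' : Type) (H' : SimpleGraph VH'),
      IsShallowTopMinor 1 H' (GPsi ψ succ) → graphDensity H' ≤ graphDensity H)
    (hdens : (5 * m : ℚ) / (2 * m + 1) ≤ graphDensity H) :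
    ∀ M : SubdivModel H (GPsi ψ succ),
      (∀ u v (h : H.Adj u v), (M.path u v h).length ≤ 2) →
      (none ∈ Set.range M.nail ∧
        ∀ x : VH, M.nail x = none ∨ ∃ o : ψ.Occ, M.nail x = some (Sum.inl o)) := by
  intro M hlen2
  classical
  have h2 := lt_of_lt_of_le (Stmt7.two_lt_target hm) hdens
  have hn0 : Nat.card VH ≠ 0 := by
    intro h; rw [graphDensity, h] at h2; norm_num at h2
  obtain ⟨hnem, hfin⟩ := Nat.card_pos_iff.mp (Nat.pos_of_ne_zero hn0)
  -- Step 1: no black nails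
  have hblack : ∀ x : VH, ∀ o b, M.nail x ≠ Stmt7.bk o b := by
    intro x o b hx
    have hdeg : (H.neighborSet x).ncard ≤ 2 := by
      cases b
      · refine le_trans (Stmt7.deg_le M hlen2 x {Stmt7.wh o, Stmt7.wh (succ o)} ?_) ?_
        · intro y hy; rw [hx] at hy
          rcases Stmt7.adj_bk_false hy with h | h <;> simp [h]
        · exact (Finset.card_insert_le _ _).trans (by simp)
      · refine le_trans (Stmt7.deg_le M hlen2 x {none, Stmt7.wh o} ?_) ?_
        · intro y hy; rw [hx] at hy
          rcases Stmt7.adj_bk_true hy with h | h <;> simp [h]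
        · exact (Finset.card_insert_le _ _).trans (by simp)
    exact Stmt7.contra_del hm hmax hdens M hlen2 x hdeg
  -- Step 2: no gray nails
  have hgray : ∀ x : VH, ∀ i, M.nail x ≠ Stmt7.gr ψ i := by
    intro x i hx
    have hdeg3 : (H.neighborSet x).ncard ≤ 3 := by
      refine le_trans (Stmt7.deg_le M hlen2 x
        ((Finset.univ.filter (fun o : ψ.Occ => o.1.1 = i)).image Stmt7.wh) ?_) ?_
      · intro y hy; rw [hx] at hy
        obtain ⟨o, ho, rfl⟩ := Stmt7.adj_gr hy
        exact Finset.mem_image_of_mem _ (by simp [ho])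
      · exact Finset.card_image_le.trans (Stmt7.occ_filter_card ψ i)
    by_cases hdeg2 : (H.neighborSet x).ncard ≤ 2
    · exact Stmt7.contra_del hm hmax hdens M hlen2 x hdeg2
    have h1lt : 1 < (H.neighborSet x).ncard := by omega
    rw [Set.one_lt_ncard_iff (Set.toFinite _)] at h1lt
    obtain ⟨u1, u2, hu1m, hu2m, hu12⟩ := h1lt
    have hu1 : H.Adj x u1 := hu1m
    have hu2 : H.Adj x u2 := hu2m
    -- every neighbour of x is joined to it by a direct edge, towards a white of clause i
    have hdir : ∀ u, H.Adj x u → ∃ o : ψ.Occ, o.1.1 = i ∧ M.nail u = Stmt7.wh o := by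
      intro u hu
      rcases Stmt7.model_dich M hlen2 hu with ⟨-, ha⟩ | ⟨s, -, hs1, hs2, -, hnn⟩
      · rw [hx] at ha
        obtain ⟨o, ho, hyo⟩ := Stmt7.adj_gr ha
        exact ⟨o, ho, hyo⟩
      · exfalso
        rw [hx] at hs1
        obtain ⟨o, ho, rfl⟩ := Stmt7.adj_gr hs1
        rcases Stmt7.adj_wh hs2 with h | h | h | h
        · exact hblack u _ _ h
        · exact hblack u _ _ h
        · exact hblack u _ _ h
        · rw [ho] at h
          rw [← hx] at h
          exact hu.ne (M.nail_inj h.symm)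
    obtain ⟨o1, ho1, hn1⟩ := hdir u1 hu1
    obtain ⟨o2, ho2, hn2⟩ := hdir u2 hu2
    have ho12 : o1 ≠ o2 := by
      rintro rfl
      exact hu12 (M.nail_inj (hn1.trans hn2.symm))
    have hv12 : o1.1.2 ≠ o2.1.2 := by
      intro h
      exact ho12 (Subtype.ext (Prod.ext (ho1.trans ho2.symm) h))
    have hnadj : ¬ H.Adj u1 u2 := by
      intro hA
      rcases Stmt7.model_dich M hlen2 hA with ⟨-, ha⟩ | ⟨s, -, hs1, hs2, -, hnn⟩
      · rw [hn1, hn2] at ha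
        rcases Stmt7.adj_wh ha with h | h | h | h <;> simp [Stmt7.wh, Stmt7.bk, Stmt7.gr] at h
      · rw [hn1] at hs1
        rw [hn2] at hs2
        rcases Stmt7.adj_wh hs1 with h | h | h | h
        · subst h
          rcases Stmt7.adj_bk_true hs2 with h' | h'
          · simp [Stmt7.wh] at h'
          · exact ho12 (by simpa [Stmt7.wh, Stmt7.gp_some_inj] using h'.symm)
        · subst h
          rcases Stmt7.adj_bk_false hs2 with h' | h'
          · exact ho12 (by simpa [Stmt7.wh, Stmt7.gp_some_inj] using h'.symm)
          · have : o2 = succ o1 := by simpa [Stmt7.wh, Stmt7.gp_some_inj] using h'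
            exact hv12 (this ▸ (hsucc.1 o1).symm)
        · subst h
          rcases Stmt7.adj_bk_false hs2 with h' | h'
          · have : o2 = succ.symm o1 := by simpa [Stmt7.wh, Stmt7.gp_some_inj] using h'
            have hv : (succ (succ.symm o1)).1.2 = (succ.symm o1).1.2 := hsucc.1 _
            rw [Equiv.apply_symm_apply] at hv
            exact hv12 (this ▸ hv)
          · rw [Equiv.apply_symm_apply] at h'
            exact ho12 (by simpa [Stmt7.wh, Stmt7.gp_some_inj] using h'.symm)
        · rw [ho1, ← hx] at h
          exact hnn x h
    have hc1 : (GPsi ψ succ).Adj (M.nail u1) (Stmt7.gr ψ i) := by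
      rw [hn1]; exact Stmt7.adj_wh_gr ho1
    have hc2 : (GPsi ψ succ).Adj (Stmt7.gr ψ i) (M.nail u2) := by
      rw [hn2]; exact (Stmt7.adj_wh_gr ho2).symm
    exact Stmt7.contra_ext hm hmax hdens M hlen2 hu1 hu2 hu12 hc1 hc2 hx.symm hnadj hdeg3
  -- Step 3: classification of nails
  have hclass : ∀ x : VH, M.nail x = none ∨ ∃ o : ψ.Occ, M.nail x = some (Sum.inl o) := by
    intro x
    rcases hyp : M.nail x with _ | (o | i | ⟨o, b⟩)
    · exact Or.inl rfl
    · exact Or.inr ⟨o, rfl⟩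
    · exact absurd hyp (hgray x i)
    · exact absurd hyp (hblack x o b)
  refine ⟨?_, hclass⟩
  -- Step 4: the apex must be a nail
  by_contra hnone
  have hwh : ∀ x : VH, ∃ o : ψ.Occ, M.nail x = Stmt7.wh o := by
    intro x
    rcases hclass x with h | h
    · exact absurd ⟨x, h⟩ hnone
    · exact h
  haveI : Fintype VH := Fintype.ofFinite VH
  have hdeg4 : ∀ x : VH, H.degree x ≤ 4 := by
    intro x
    obtain ⟨o, ho⟩ := hwh x
    rw [Stmt7.deg_eq_ncard]
    refine le_trans (Stmt7.deg_le M hlen2 x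
      {Stmt7.bk o true, Stmt7.bk o false, Stmt7.bk (succ.symm o) false, Stmt7.gr ψ o.1.1} ?_)
      (Stmt7.card4 _ _ _ _)
    intro y hy; rw [ho] at hy
    rcases Stmt7.adj_wh hy with h | h | h | h <;> simp [h]
  have hsum := H.sum_degrees_eq_twice_card_edges
  have hsum4 : ∑ v : VH, H.degree v ≤ 4 * Fintype.card VH := by
    calc ∑ v : VH, H.degree v ≤ ∑ _v : VH, 4 := Finset.sum_le_sum (fun v _ => hdeg4 v)
      _ = 4 * Fintype.card VH := by simp [Finset.sum_const, Finset.card_univ, Nat.mul_comm]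
  have hecard : H.edgeSet.ncard = H.edgeFinset.card := by
    rw [SimpleGraph.edgeFinset, Set.toFinset_card, ← Nat.card_coe_set_eq,
      Nat.card_eq_fintype_card]
  have hEn : 2 * H.edgeSet.ncard ≤ 4 * Nat.card VH := by
    rw [hecard, Nat.card_eq_fintype_card]
    omega
  have hle2 : graphDensity H ≤ 2 := by
    rw [graphDensity]
    rcases Nat.eq_zero_or_pos (Nat.card VH) with h0 | hpos
    · exact absurd h0 hn0
    have hnQ : (0 : ℚ) < (Nat.card VH : ℚ) := by exact_mod_cast hpos
    rw [div_le_iff₀ hnQ]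
    have : (2 : ℚ) * (H.edgeSet.ncard : ℚ) ≤ 4 * (Nat.card VH : ℚ) := by exact_mod_cast hEn
    linarith
  linarith
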